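/- Consider a single TTL cache with Poisson request arrivals, exponential TTLs and exponential object fetch delays (an M/M/M cache): the inter-request time X, the TTL T and the delay Δ are independent, exponentially distributed random variables with rates λ > 0, λ_T > 0 and λ_Δ > 0 respectively. Define the object hit probability under delay as P_h(Δ) := E[N] / (1 + E[m(Δ)] + E[N]), where E[N] := P(X < T)/(1 − P(X < T)) is the expected number of hits between two misses and E[m(Δ)] := λ·E[Δ] is the expected number of requests arriving during the delay; P_h(0) denotes the same quantity with E[m(Δ)] replaced by 0. Then the delay impairment η := 1 − P_h(Δ)/P_h(0) satisfies η = τ̄_Δ / (τ̄_T + τ̄_Δ + 1), where τ̄_Δ := λ/λ_Δ is the ratio of the expected delay to the expected inter-request time and τ̄_T := λ/λ_T is the ratio of the expected TTL to the expected inter-request time. -/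

import Mathlib

open MeasureTheory ProbabilityTheory
open Real Set

lemma myExp_withDensity (r : ℝ) :
    expMeasure r = MeasureTheory.volume.withDensity (exponentialPDF r) := rfl

lemma myExp_Iio_zero (r : ℝ) : expMeasure r (Iio 0) = 0 := by
  rw [myExp_withDensity, withDensity_apply _ measurableSet_Iio]
  exact lintegral_exponentialPDF_of_nonpos le_rfl

lemma myExp_Ioi {r x : ℝ} (hr : 0 < r) (hx : 0 ≤ x) :
    expMeasure r (Ioi x) = ENNReal.ofReal (rexp (-(r * x))) := by
  have : IsProbabilityMeasure (expMeasure r) := isProbabilityMeasure_expMeasure hr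
  have h1 : expMeasure r (Iic x) = ENNReal.ofReal (1 - rexp (-(r * x))) := by
    rw [← ofReal_cdf, cdf_expMeasure_eq hr, if_pos hx]
  have he : rexp (-(r * x)) ≤ 1 := by
    rw [exp_le_one_iff]; nlinarith
  rw [← compl_Iic, measure_compl measurableSet_Iic (measure_ne_top _ _), h1,
    measure_univ, ← ENNReal.ofReal_one, ← ENNReal.ofReal_sub _ (by linarith)]
  norm_num

lemma myProb_lt {a b : ℝ} (ha : 0 < a) (hb : 0 < b) :
    ((expMeasure a).prod (expMeasure b)) {p : ℝ × ℝ | p.1 < p.2}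
      = ENNReal.ofReal (a / (a + b)) := by
  have hab : 0 < a + b := by linarith
  have : IsProbabilityMeasure (expMeasure b) := isProbabilityMeasure_expMeasure hb
  rw [Measure.prod_apply (measurableSet_lt measurable_fst measurable_snd)]
  have hpre : ∀ x : ℝ, (Prod.mk x ⁻¹' {p : ℝ × ℝ | p.1 < p.2}) = Ioi x := fun x => rfl
  simp only [hpre]
  have hmf : Measurable (exponentialPDF a) := (measurable_exponentialPDFReal a).ennreal_ofReal
  have hmg : Measurable (fun x : ℝ => expMeasure b (Ioi x)) := by
    refine Antitone.measurable (fun x y hxy => ?_)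
    exact measure_mono (Ioi_subset_Ioi hxy)
  rw [myExp_withDensity a, lintegral_withDensity_eq_lintegral_mul _ hmf hmg]
  · have hcong : ∀ x : ℝ, exponentialPDF a x * expMeasure b (Ioi x)
        = (Ici (0:ℝ)).indicator (fun x => ENNReal.ofReal (a * rexp (-((a + b) * x)))) x := by
      intro x
      by_cases hx : 0 ≤ x
      · rw [exponentialPDF_of_nonneg hx, myExp_Ioi hb hx, indicator_of_mem (mem_Ici.mpr hx),
          ← ENNReal.ofReal_mul (by positivity)]
        congr 1
        rw [mul_assoc, ← Real.exp_add]
        ring_nf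
      · rw [exponentialPDF_of_neg (lt_of_not_ge hx), zero_mul,
          indicator_of_notMem (by simpa using hx)]
    simp only [Pi.mul_apply]
    rw [lintegral_congr hcong, lintegral_indicator measurableSet_Ici _,
      ← MeasureTheory.Measure.restrict_congr_set Ioi_ae_eq_Ici,
      ← ofReal_integral_eq_lintegral_ofReal ?_ ?_]
    · congr 1
      rw [MeasureTheory.integral_const_mul]
      have h := integral_rpow_mul_exp_neg_mul_Ioi (zero_lt_one) hab
      simp only [sub_self, Real.rpow_zero, one_mul, Real.Gamma_one, Real.rpow_one, mul_one] at h
      rw [h]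
      field_simp
    · have h2 := (exp_neg_integrableOn_Ioi 0 hab).const_mul a
      refine h2.congr (Filter.EventuallyEq.of_eq (funext fun x => ?_))
      ring_nf
    · filter_upwards with x
      positivity


lemma myExp_mean {r : ℝ} (hr : 0 < r) : ∫ x, x ∂(expMeasure r) = 1 / r := by
  have hae : 0 ≤ᵐ[expMeasure r] (fun x : ℝ => x) := by
    rw [Filter.EventuallyLE, ae_iff]
    refine measure_mono_null (fun x hx => ?_) (myExp_Iio_zero r)
    simpa using hx
  rw [integral_eq_lintegral_of_nonneg_ae hae aestronglyMeasurable_id]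
  have hmf : Measurable (exponentialPDF r) := (measurable_exponentialPDFReal r).ennreal_ofReal
  rw [myExp_withDensity r,
    lintegral_withDensity_eq_lintegral_mul _ hmf ENNReal.measurable_ofReal]
  have hcong : ∀ x : ℝ, (exponentialPDF r * fun x => ENNReal.ofReal x) x
      = (Ici (0:ℝ)).indicator (fun x => ENNReal.ofReal (r * rexp (-(r * x)) * x)) x := by
    intro x
    by_cases hx : 0 ≤ x
    · rw [Pi.mul_apply, exponentialPDF_of_nonneg hx, indicator_of_mem (mem_Ici.mpr hx),
        ← ENNReal.ofReal_mul (by positivity)]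
    · rw [Pi.mul_apply, exponentialPDF_of_neg (lt_of_not_ge hx), zero_mul,
        indicator_of_notMem (by simpa using hx)]
  have hInt : IntegrableOn (fun x : ℝ => r * rexp (-(r * x)) * x) (Ioi 0) := by
    have h0 := Real.GammaIntegral_convergent (by norm_num : (0:ℝ) < 2)
    have h1 := (integrableOn_Ioi_comp_mul_left_iff
      (fun x : ℝ => rexp (-x) * x ^ ((2:ℝ) - 1)) 0 hr).mpr (by simpa using h0)
    have h2 : (fun x : ℝ => rexp (-(r * x)) * (r * x) ^ ((2:ℝ) - 1))
        = fun x : ℝ => rexp (-(r * x)) * (r * x) := by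
      funext x; norm_num
    rw [h2] at h1
    refine h1.congr (Filter.EventuallyEq.of_eq (funext fun x => ?_))
    ring
  rw [lintegral_congr hcong, lintegral_indicator measurableSet_Ici _,
    ← MeasureTheory.Measure.restrict_congr_set Ioi_ae_eq_Ici,
    ← ofReal_integral_eq_lintegral_ofReal hInt ?_]
  · rw [ENNReal.toReal_ofReal ?_]
    · have h := integral_rpow_mul_exp_neg_mul_Ioi (by norm_num : (0:ℝ) < 2) hr
      norm_num [Real.Gamma_two] at h
      have : ∫ x in Ioi (0:ℝ), r * rexp (-(r * x)) * x
          = r * ∫ x in Ioi (0:ℝ), x * rexp (-(r * x)) := by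
        rw [← MeasureTheory.integral_const_mul]
        congr 1; funext x; ring
      rw [this, h]
      field_simp
    · refine setIntegral_nonneg measurableSet_Ioi fun x hx => ?_
      exact mul_nonneg (by positivity) (le_of_lt (mem_Ioi.mp hx))
  · filter_upwards [self_mem_ae_restrict measurableSet_Ioi] with x hx
    exact mul_nonneg (by positivity) (le_of_lt (mem_Ioi.mp hx))
/-- For a single M/M/M TTL cache (Poisson requests with rate `lam`, exponential TTL with
rate `lamT`, exponential object fetch delay with rate `lamD`), the delay impairment
`η = 1 - P_h(Δ)/P_h(0)` equals `τ̄_Δ / (τ̄_T + τ̄_Δ + 1)`, where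
`P_h(Δ) = E[N]/(1 + E[m(Δ)] + E[N])`, `E[N] = P(X < T)/(1 - P(X < T))`,
`E[m(Δ)] = lam * E[Δ]`, `τ̄_Δ = lam/lamD` and `τ̄_T = lam/lamT`. -/
theorem delay_impairment_single_MMM_cache
    {Ω : Type*} [MeasurableSpace Ω] (μ : Measure Ω) [IsProbabilityMeasure μ]
    (X T Δ : Ω → ℝ) (lam lamT lamD : ℝ)
    (hlam : 0 < lam) (hlamT : 0 < lamT) (hlamD : 0 < lamD)
    (hmX : Measurable X) (hmT : Measurable T) (hmΔ : Measurable Δ)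
    (hX : μ.map X = expMeasure lam)
    (hT : μ.map T = expMeasure lamT)
    (hΔ : μ.map Δ = expMeasure lamD)
    (hindep : iIndepFun ![X, T, Δ] μ)
    (p EN Em PhD Ph0 : ℝ)
    (hp : p = (μ {ω | X ω < T ω}).toReal)
    (hEN : EN = p / (1 - p))
    (hEm : Em = lam * ∫ ω, Δ ω ∂μ)
    (hPhD : PhD = EN / (1 + Em + EN))
    (hPh0 : Ph0 = EN / (1 + 0 + EN)) :
    1 - PhD / Ph0 = (lam / lamD) / (lam / lamT + lam / lamD + 1) := by
  -- compute p
  have hXT : IndepFun X T μ := by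
    have h := hindep.indepFun (i := 0) (j := 1) (by decide)
    simpa using h
  have hmapXT : μ.map (fun ω => (X ω, T ω)) = (μ.map X).prod (μ.map T) :=
    (indepFun_iff_map_prod_eq_prod_map_map hmX.aemeasurable hmT.aemeasurable).mp hXT
  have hpv : p = lam / (lam + lamT) := by
    rw [hp, show {ω | X ω < T ω} = (fun ω => (X ω, T ω)) ⁻¹' {q : ℝ × ℝ | q.1 < q.2} from rfl,
      ← Measure.map_apply (hmX.prodMk hmT) (measurableSet_lt measurable_fst measurable_snd),
      hmapXT, hX, hT, myProb_lt hlam hlamT, ENNReal.toReal_ofReal (by positivity)]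
  have hEΔ : ∫ ω, Δ ω ∂μ = 1 / lamD := by
    have h := integral_map (μ := μ) (φ := Δ) (f := fun x : ℝ => x) hmΔ.aemeasurable
      aestronglyMeasurable_id
    rw [hΔ, myExp_mean hlamD] at h
    exact h.symm
  have hENv : EN = lam / lamT := by
    rw [hEN, hpv]
    have h1 : lam + lamT ≠ 0 := by positivity
    field_simp
    rw [add_sub_cancel_left]; exact div_self hlamT.ne'
  have hEmv : Em = lam / lamD := by
    rw [hEm, hEΔ]; ring
  rw [hPhD, hPh0, hENv, hEmv]
  have h1 : (0:ℝ) < lam / lamT := by positivity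
  have h2 : (0:ℝ) < lam / lamD := by positivity
  field_simp
  ring
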